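/- arXiv:1312.2770 — 4 statements merged into one kernel-verified Lean document; each statement's English description precedes it below -/
import Mathlib

section
/- Let E be a Banach lattice. Every order interval [-x, x] (for x in the positive cone of E) is an almost limited subset of E if and only if E satisfies the property (d), i.e., for every disjoint weak* null sequence (f_n) in the dual E*, the sequence of absolute values (|f_n|) is weak* null. -/
open Filter Topology Metric Pointwise

/-- The value `|f| x` of the modulus of a continuous linear functional at a positive
element `x`, given by the Riesz–Kantorovich formula `|f| x = sup { f u : |u| ≤ x }`. -/
noncomputable def absFunctional {E : Type*} [NormedAddCommGroup E] [Lattice E] [IsOrderedAddMonoid E] [HasSolidNorm E] [NormedSpace ℝ E]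
    (f : E →L[ℝ] ℝ) (x : E) : ℝ :=
  sSup ((fun u => f u) '' {u : E | |u| ≤ x})

/-- Two functionals `f, g` on a Banach lattice are (lattice) disjoint: `|f| ⊓ |g| = 0`,
expressed via the Riesz–Kantorovich formula for the infimum of the positive functionals
`|f|` and `|g|`. -/
def DualDisjoint {E : Type*} [NormedAddCommGroup E] [Lattice E] [IsOrderedAddMonoid E] [HasSolidNorm E] [NormedSpace ℝ E]
    (f g : E →L[ℝ] ℝ) : Prop :=
  ∀ x : E, 0 ≤ x → ∀ ε : ℝ, 0 < ε →
    ∃ y : E, 0 ≤ y ∧ y ≤ x ∧ absFunctional f y + absFunctional g (x - y) < ε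

/-- A sequence of functionals is disjoint if any two distinct terms are lattice disjoint. -/
def DualDisjointSeq {E : Type*} [NormedAddCommGroup E] [Lattice E] [IsOrderedAddMonoid E] [HasSolidNorm E] [NormedSpace ℝ E]
    (f : ℕ → E →L[ℝ] ℝ) : Prop :=
  ∀ m k, m ≠ k → DualDisjoint (f m) (f k)

/-- A sequence of functionals is weak* null if it converges to `0` pointwise. -/
def WeakStarNull {E : Type*} [NormedAddCommGroup E] [NormedSpace ℝ E]
    (f : ℕ → E →L[ℝ] ℝ) : Prop :=
  ∀ x : E, Tendsto (fun n => f n x) atTop (𝓝 (0 : ℝ))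

/-- The sequence `(|f n|)` of moduli is weak* null (it suffices to test on positive
elements since `|f n|` is additive and every element is a difference of positives). -/
def AbsWeakStarNull {E : Type*} [NormedAddCommGroup E] [Lattice E] [IsOrderedAddMonoid E] [HasSolidNorm E] [NormedSpace ℝ E]
    (f : ℕ → E →L[ℝ] ℝ) : Prop :=
  ∀ x : E, 0 ≤ x → Tendsto (fun n => absFunctional (f n) x) atTop (𝓝 (0 : ℝ))

/-- A functional is positive if it is nonnegative on the positive cone. -/
def PositiveFunctional {E : Type*} [NormedAddCommGroup E] [Lattice E] [IsOrderedAddMonoid E] [HasSolidNorm E] [NormedSpace ℝ E]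
    (f : E →L[ℝ] ℝ) : Prop :=
  ∀ x : E, 0 ≤ x → 0 ≤ f x

/-- A norm bounded set `A` is almost limited if every disjoint weak* null sequence of
functionals converges to `0` uniformly on `A`. -/
def AlmostLimitedSet {E : Type*} [NormedAddCommGroup E] [Lattice E] [IsOrderedAddMonoid E] [HasSolidNorm E] [NormedSpace ℝ E]
    (A : Set E) : Prop :=
  Bornology.IsBounded A ∧
    ∀ f : ℕ → E →L[ℝ] ℝ, DualDisjointSeq f → WeakStarNull f →
      TendstoUniformlyOn (fun n x => f n x) (fun _ => (0 : ℝ)) atTop A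

/-- A norm bounded set `A` in a Banach space is limited if every weak* null sequence of
functionals converges to `0` uniformly on `A`. -/
def LimitedSet {X : Type*} [NormedAddCommGroup X] [NormedSpace ℝ X] (A : Set X) : Prop :=
  Bornology.IsBounded A ∧
    ∀ f : ℕ → X →L[ℝ] ℝ, WeakStarNull f →
      TendstoUniformlyOn (fun n x => f n x) (fun _ => (0 : ℝ)) atTop A

/-- Property (d): for every disjoint weak* null sequence `(f n)`, `(|f n|)` is weak* null. -/
def PropertyD (E : Type*) [NormedAddCommGroup E] [Lattice E] [IsOrderedAddMonoid E] [HasSolidNorm E] [NormedSpace ℝ E] : Prop :=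
  ∀ f : ℕ → E →L[ℝ] ℝ, DualDisjointSeq f → WeakStarNull f → AbsWeakStarNull f

/-- The lattice operations of the dual are weak* sequentially continuous: for every
weak* null sequence `(f n)`, `(|f n|)` is weak* null. -/
def DualLatticeWeakStarSeqCont (E : Type*) [NormedAddCommGroup E] [Lattice E] [IsOrderedAddMonoid E] [HasSolidNorm E]
    [NormedSpace ℝ E] : Prop :=
  ∀ f : ℕ → E →L[ℝ] ℝ, WeakStarNull f → AbsWeakStarNull f

/-- A sequence in a Banach lattice is disjoint if the moduli of distinct terms meet at 0. -/
def LatticeDisjointSeq {E : Type*} [NormedAddCommGroup E] [Lattice E] [IsOrderedAddMonoid E] [HasSolidNorm E] (x : ℕ → E) : Prop :=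
  ∀ m k, m ≠ k → |x m| ⊓ |x k| = 0

/-- A sequence is weakly null if `f (x n) → 0` for every continuous linear functional. -/
def WeaklyNull {E : Type*} [NormedAddCommGroup E] [NormedSpace ℝ E] (x : ℕ → E) : Prop :=
  ∀ f : E →L[ℝ] ℝ, Tendsto (fun n => f (x n)) atTop (𝓝 (0 : ℝ))

/-- A set is solid if `x ∈ A` and `|y| ≤ |x|` imply `y ∈ A`. -/
def IsSolid {E : Type*} [NormedAddCommGroup E] [Lattice E] [IsOrderedAddMonoid E] [HasSolidNorm E] (A : Set E) : Prop :=
  ∀ x ∈ A, ∀ y : E, |y| ≤ |x| → y ∈ A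

/-- The solid hull of a set. -/
def solidHull {E : Type*} [NormedAddCommGroup E] [Lattice E] [IsOrderedAddMonoid E] [HasSolidNorm E] (A : Set E) : Set E :=
  {y | ∃ x ∈ A, |y| ≤ |x|}

/-- A set is almost order bounded if for every `ε > 0` it is contained in
`[-u, u] + ε B_E` for some positive `u`. -/
def AlmostOrderBounded {E : Type*} [NormedAddCommGroup E] [Lattice E] [IsOrderedAddMonoid E] [HasSolidNorm E] (A : Set E) : Prop :=
  ∀ ε : ℝ, 0 < ε → ∃ u : E, 0 ≤ u ∧ A ⊆ Set.Icc (-u) u + Metric.closedBall (0 : E) ε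

/-- σ-Dedekind completeness: every countable nonempty set bounded above has a supremum. -/
def SigmaDedekindComplete (E : Type*) [NormedAddCommGroup E] [Lattice E] [IsOrderedAddMonoid E] [HasSolidNorm E] : Prop :=
  ∀ s : Set E, s.Countable → s.Nonempty → BddAbove s → ∃ b : E, IsLUB s b

/-- A set is relatively weakly compact if its closure in the weak topology is compact. -/
def RelativelyWeaklyCompact {E : Type*} [NormedAddCommGroup E] [NormedSpace ℝ E]
    (A : Set E) : Prop :=
  IsCompact (closure ((toWeakSpace ℝ E) '' A))

/-- The weak Dunford–Pettis* property: every relatively weakly compact set is almost limited. -/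
def WDPStar (E : Type*) [NormedAddCommGroup E] [Lattice E] [IsOrderedAddMonoid E] [HasSolidNorm E] [NormedSpace ℝ E] : Prop :=
  ∀ A : Set E, RelativelyWeaklyCompact A → AlmostLimitedSet A

/-- The bi-sequence property: for each disjoint weakly null sequence in the positive cone
and each weak* null sequence of positive functionals, `f n (x n) → 0`. -/
def BiSequenceProperty (E : Type*) [NormedAddCommGroup E] [Lattice E] [IsOrderedAddMonoid E] [HasSolidNorm E] [NormedSpace ℝ E] : Prop :=
  ∀ x : ℕ → E, (∀ n, 0 ≤ x n) → LatticeDisjointSeq x → WeaklyNull x →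
    ∀ f : ℕ → E →L[ℝ] ℝ, (∀ n, PositiveFunctional (f n)) → WeakStarNull f →
      Tendsto (fun n => f n (x n)) atTop (𝓝 (0 : ℝ))

/-- The dual Schur property: every disjoint weak* null sequence of functionals is norm null. -/
def DualSchur (E : Type*) [NormedAddCommGroup E] [Lattice E] [IsOrderedAddMonoid E] [HasSolidNorm E] [NormedSpace ℝ E] : Prop :=
  ∀ f : ℕ → E →L[ℝ] ℝ, DualDisjointSeq f → WeakStarNull f →
    Tendsto (fun n => ‖f n‖) atTop (𝓝 (0 : ℝ))

/-- The dual positive Schur property: every weak* null sequence of positive functionals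
is norm null. -/
def DualPositiveSchur (E : Type*) [NormedAddCommGroup E] [Lattice E] [IsOrderedAddMonoid E] [HasSolidNorm E] [NormedSpace ℝ E] : Prop :=
  ∀ f : ℕ → E →L[ℝ] ℝ, (∀ n, PositiveFunctional (f n)) → WeakStarNull f →
    Tendsto (fun n => ‖f n‖) atTop (𝓝 (0 : ℝ))

/-- The norm of a Banach lattice is order continuous: every net decreasing to `0`
converges to `0` in norm. -/
def OrderContinuousNorm (E : Type*) [NormedAddCommGroup E] [Lattice E] [IsOrderedAddMonoid E] [HasSolidNorm E] : Prop :=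
  ∀ {ι : Type*} [Preorder ι] [IsDirected ι (· ≤ ·)] [Nonempty ι] (x : ι → E),
    Antitone x → IsGLB (Set.range x) 0 → Tendsto (fun i => ‖x i‖) atTop (𝓝 (0 : ℝ))

/-- The norm of the dual Banach lattice is order continuous: every net of functionals
decreasing to `0` (in the dual order, i.e., pointwise on the positive cone, with greatest
lower bound `0`) converges to `0` in norm. -/
def DualOrderContinuousNorm (E : Type*) [NormedAddCommGroup E] [Lattice E] [IsOrderedAddMonoid E] [HasSolidNorm E]
    [NormedSpace ℝ E] : Prop :=
  ∀ {ι : Type*} [Preorder ι] [IsDirected ι (· ≤ ·)] [Nonempty ι] (f : ι → E →L[ℝ] ℝ),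
    (∀ i j, i ≤ j → ∀ x : E, 0 ≤ x → f j x ≤ f i x) →
    (∀ i, PositiveFunctional (f i)) →
    (∀ g : E →L[ℝ] ℝ, (∀ i, ∀ x : E, 0 ≤ x → g x ≤ f i x) → ∀ x : E, 0 ≤ x → g x ≤ 0) →
    Tendsto (fun i => ‖f i‖) atTop (𝓝 (0 : ℝ))

/-- A norm bounded set `A` is L-weakly compact if every disjoint sequence in its solid
hull is norm null. -/
def LWeaklyCompactSet {E : Type*} [NormedAddCommGroup E] [Lattice E] [IsOrderedAddMonoid E] [HasSolidNorm E] (A : Set E) : Prop :=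
  Bornology.IsBounded A ∧
    ∀ y : ℕ → E, (∀ n, y n ∈ solidHull A) → LatticeDisjointSeq y →
      Tendsto (fun n => ‖y n‖) atTop (𝓝 (0 : ℝ))

/-- An atom of a Banach lattice. -/
def IsLatticeAtom {E : Type*} [NormedAddCommGroup E] [Lattice E] [IsOrderedAddMonoid E] [HasSolidNorm E] (a : E) : Prop :=
  0 < a ∧ ∀ x y : E, 0 ≤ x → x ≤ a → 0 ≤ y → y ≤ a → x ⊓ y = 0 → x = 0 ∨ y = 0

/-- A Banach lattice is discrete (atomic) if the band generated by its atoms is the whole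
lattice; equivalently, the only element disjoint from all atoms is `0`. -/
def DiscreteBanachLattice (E : Type*) [NormedAddCommGroup E] [Lattice E] [IsOrderedAddMonoid E] [HasSolidNorm E] : Prop :=
  ∀ x : E, (∀ a : E, IsLatticeAtom a → |x| ⊓ a = 0) → x = 0

/-- A linear operator between Banach lattices is order bounded if it maps order intervals
into order intervals. -/
def OrderBoundedOperator {E F : Type*} [NormedAddCommGroup E] [Lattice E] [IsOrderedAddMonoid E] [HasSolidNorm E] [NormedSpace ℝ E]
    [NormedAddCommGroup F] [Lattice F] [IsOrderedAddMonoid F] [HasSolidNorm F] [NormedSpace ℝ F] (T : E →ₗ[ℝ] F) : Prop :=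
  ∀ a b : E, ∃ c d : F, T '' Set.Icc a b ⊆ Set.Icc c d

section Aux

variable {E : Type*} [NormedAddCommGroup E] [Lattice E] [IsOrderedAddMonoid E] [HasSolidNorm E] [NormedSpace ℝ E]

lemma aux_norm_le {u x : E} (hx : 0 ≤ x) (hu : |u| ≤ x) : ‖u‖ ≤ ‖x‖ := by
  have : |u| ≤ |x| := by rwa [abs_of_nonneg hx]
  exact HasSolidNorm.solid this

lemma aux_bdd (f : E →L[ℝ] ℝ) {x : E} (hx : 0 ≤ x) :
    BddAbove ((fun u => f u) '' {u : E | |u| ≤ x}) := by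
  refine ⟨‖f‖ * ‖x‖, ?_⟩
  rintro _ ⟨u, hu, rfl⟩
  calc f u ≤ |f u| := le_abs_self _
    _ = ‖f u‖ := (Real.norm_eq_abs _).symm
    _ ≤ ‖f‖ * ‖u‖ := f.le_opNorm u
    _ ≤ ‖f‖ * ‖x‖ := mul_le_mul_of_nonneg_left (aux_norm_le hx hu) (norm_nonneg f)

lemma aux_abs_le_iff {u x : E} : |u| ≤ x ↔ u ∈ Set.Icc (-x) x := by
  rw [abs_le', Set.mem_Icc, neg_le, and_comm]

lemma aux_mem_zero {x : E} (hx : 0 ≤ x) : (0 : E) ∈ {u : E | |u| ≤ x} := by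
  simpa using hx

lemma aux_nonneg (f : E →L[ℝ] ℝ) {x : E} (hx : 0 ≤ x) : 0 ≤ absFunctional f x := by
  have h0 : (0 : ℝ) ∈ (fun u => f u) '' {u : E | |u| ≤ x} :=
    ⟨0, aux_mem_zero hx, map_zero f⟩
  exact le_csSup (aux_bdd f hx) h0

lemma aux_abs_le (f : E →L[ℝ] ℝ) {x u : E} (hx : 0 ≤ x) (hu : |u| ≤ x) :
    |f u| ≤ absFunctional f x := by
  rw [abs_le']
  constructor
  · exact le_csSup (aux_bdd f hx) ⟨u, hu, rfl⟩
  · have : f (-u) ≤ absFunctional f x :=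
      le_csSup (aux_bdd f hx) ⟨-u, by simpa using hu, rfl⟩
    simpa [map_neg] using this

lemma aux_le_of_forall (f : E →L[ℝ] ℝ) {x : E} (hx : 0 ≤ x) {c : ℝ}
    (h : ∀ u : E, |u| ≤ x → f u ≤ c) : absFunctional f x ≤ c := by
  refine csSup_le ⟨0, 0, aux_mem_zero hx, map_zero f⟩ ?_
  rintro _ ⟨u, hu, rfl⟩
  exact h u hu

end Aux

/-- Every order interval `[-x, x]` (for `x ≥ 0`) of a Banach lattice `E` is
almost limited if and only if `E` has property (d). -/
theorem statement0 {E : Type*} [NormedAddCommGroup E] [Lattice E] [IsOrderedAddMonoid E] [HasSolidNorm E] [NormedSpace ℝ E]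
    [CompleteSpace E] :
    (∀ x : E, 0 ≤ x → AlmostLimitedSet (Set.Icc (-x) x)) ↔ PropertyD E := by
  constructor
  · intro h f hd hw x hx
    have hU := (h x hx).2 f hd hw
    rw [Metric.tendstoUniformlyOn_iff] at hU
    rw [NormedAddCommGroup.tendsto_nhds_zero]
    intro ε hε
    filter_upwards [hU (ε / 2) (half_pos hε)] with n hn
    have hle : absFunctional (f n) x ≤ ε / 2 := by
      refine aux_le_of_forall (f n) hx fun u hu => ?_
      have hmem : u ∈ Set.Icc (-x) x := aux_abs_le_iff.mp hu
      have := hn u hmem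
      rw [Real.dist_eq, abs_sub_comm] at this
      calc f n u ≤ |f n u| := le_abs_self _
        _ = |f n u - 0| := by ring_nf
        _ ≤ ε / 2 := le_of_lt this
    have hge := aux_nonneg (f n) hx
    rw [Real.norm_eq_abs, abs_of_nonneg hge]
    linarith
  · intro h x hx
    constructor
    · exact Bornology.IsBounded.subset (Metric.isBounded_closedBall (x := (0 : E)) (r := ‖x‖))
        (fun u hu => by
          simpa [Metric.mem_closedBall, dist_zero_right] using
            aux_norm_le hx (aux_abs_le_iff.mpr hu))
    · intro f hd hw
      have habs := h f hd hw x hx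
      rw [Metric.tendstoUniformlyOn_iff]
      intro ε hε
      rw [NormedAddCommGroup.tendsto_nhds_zero] at habs
      filter_upwards [habs ε hε] with n hn u hu
      have h1 : |f n u| ≤ absFunctional (f n) x :=
        aux_abs_le (f n) hx (aux_abs_le_iff.mpr hu)
      have h2 : |absFunctional (f n) x| < ε := by
        simpa [Real.norm_eq_abs] using hn
      rw [Real.dist_eq]
      calc |0 - f n u| = |f n u| := by rw [zero_sub, abs_neg]
        _ ≤ absFunctional (f n) x := h1
        _ ≤ |absFunctional (f n) x| := le_abs_self _
        _ < ε := h2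
end

section
/- Let A be a norm bounded subset of a Banach lattice E. If for every ε > 0 there exists an almost limited subset A_ε of E such that A ⊆ A_ε + ε B_E (where B_E is the closed unit ball of E), then A is almost limited. -/
open Filter Topology Metric Pointwise

/-- If a norm bounded set `A` in a Banach lattice `E` satisfies
`A ⊆ A_ε + ε B_E` with `A_ε` almost limited, for every `ε > 0`, then `A` is almost limited. -/
theorem statement2 {E : Type*} [NormedAddCommGroup E] [Lattice E] [IsOrderedAddMonoid E] [HasSolidNorm E] [NormedSpace ℝ E]
    [CompleteSpace E] (A : Set E) (hA : Bornology.IsBounded A)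
    (h : ∀ ε : ℝ, 0 < ε → ∃ B : Set E, AlmostLimitedSet B ∧
      A ⊆ B + Metric.closedBall (0 : E) ε) :
    AlmostLimitedSet A := by
  refine ⟨hA, fun f hdisj hnull => ?_⟩
  -- uniform bound on ‖f n‖ via Banach–Steinhaus
  obtain ⟨C, hC⟩ : ∃ C, ∀ n, ‖f n‖ ≤ C := by
    apply banach_steinhaus
    intro x
    obtain ⟨c, hc⟩ := (hnull x).norm.bddAbove_range
    exact ⟨c, fun n => hc ⟨n, rfl⟩⟩
  have hC0 : 0 ≤ C := le_trans (norm_nonneg _) (hC 0)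
  rw [Metric.tendstoUniformlyOn_iff]
  intro ε hε
  have hδ : 0 < ε / 2 / (C + 1) := by positivity
  obtain ⟨B, hBlim, hAB⟩ := h _ hδ
  have hBu := hBlim.2 f hdisj hnull
  rw [Metric.tendstoUniformlyOn_iff] at hBu
  filter_upwards [hBu (ε / 2) (by positivity)] with n hn
  intro x hx
  obtain ⟨b, hb, y, hy, rfl⟩ := hAB hx
  have hyn : ‖y‖ ≤ ε / 2 / (C + 1) := by
    simpa [Metric.mem_closedBall] using hy
  have h1 : |f n b| < ε / 2 := by
    have := hn b hb
    simpa [Real.dist_eq, abs_sub_comm] using this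
  have h2 : |f n y| ≤ ε / 2 := by
    calc |f n y| ≤ ‖f n‖ * ‖y‖ := (f n).le_opNorm y
    _ ≤ C * (ε / 2 / (C + 1)) := by
        apply mul_le_mul (hC n) hyn (norm_nonneg _) hC0
    _ ≤ ε / 2 := by
        rw [← mul_div_assoc, div_le_iff₀ (by positivity : (0:ℝ) < C + 1)]
        nlinarith
  have : |f n (b + y)| ≤ |f n b| + |f n y| := by
    rw [map_add]; exact abs_add_le _ _
  rw [Real.dist_eq]
  calc |0 - f n (b + y)| = |f n (b + y)| := by rw [zero_sub, abs_neg]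
  _ ≤ |f n b| + |f n y| := this
  _ < ε / 2 + ε / 2 := by linarith
  _ = ε := by ring
end

section
/- Let E and F be Banach lattices such that F has the property (d). Let T : E → F be an order bounded operator and let A be a norm bounded solid subset of E. Then T(A) is an almost limited subset of F if and only if f_n(T(x_n)) → 0 for every disjoint sequence (x_n) contained in A ∩ E⁺ and every disjoint weak* null sequence (f_n) consisting of positive functionals in F*. -/
open Filter Topology Metric Pointwise

section SmulOrder

variable {X : Type*} [NormedAddCommGroup X] [Lattice X] [IsOrderedAddMonoid X] [HasSolidNorm X] [NormedSpace ℝ X]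

private lemma inf_add_le_of_nonneg {u v w : X} (hu : 0 ≤ u) (hv : 0 ≤ v) (hw : 0 ≤ w) :
    u ⊓ (v + w) ≤ u ⊓ v + u ⊓ w := by
  have h : u ⊓ (v + w) - u ⊓ v ≤ u ⊓ w := by
    rw [sub_inf]
    apply sup_le
    · calc u ⊓ (v+w) - u ≤ 0 := by
            simp only [sub_nonpos]; exact inf_le_left
        _ ≤ u ⊓ w := le_inf hu hw
    · apply le_inf
      · calc u ⊓ (v+w) - v ≤ u - v := by gcongr; exact inf_le_left
          _ ≤ u := by simpa using hv
      · calc u ⊓ (v+w) - v ≤ (v + w) - v := by gcongr; exact inf_le_right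
          _ = w := add_sub_cancel_left v w
  calc u ⊓ (v + w) = (u ⊓ (v+w) - u ⊓ v) + u ⊓ v := by abel
    _ ≤ u ⊓ w + u ⊓ v := by gcongr
    _ = u ⊓ v + u ⊓ w := add_comm _ _

private lemma inf_nsmul_eq_zero {a b : X} (ha : 0 ≤ a) (hb : 0 ≤ b) (h : a ⊓ b = 0)
    (n : ℕ) : a ⊓ (n • b) = 0 := by
  induction n with
  | zero => simpa using inf_eq_right.2 ha
  | succ n ih =>
    refine le_antisymm ?_ (le_inf ha (nsmul_nonneg hb _))
    calc a ⊓ ((n+1) • b) = a ⊓ (n • b + b) := by rw [succ_nsmul]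
      _ ≤ a ⊓ (n • b) + a ⊓ b := inf_add_le_of_nonneg ha (nsmul_nonneg hb n) hb
      _ = 0 := by rw [ih, h, add_zero]

private lemma nonneg_of_nsmul_nonneg {y : X} {n : ℕ} (hn : 0 < n) (h : 0 ≤ n • y) : 0 ≤ y := by
  have hd : y⁺ ⊓ y⁻ = 0 := posPart_inf_negPart_eq_zero y
  have h1 : y⁺ ⊓ (n • y⁻) = 0 := inf_nsmul_eq_zero (posPart_nonneg y) (negPart_nonneg y) hd n
  rw [inf_comm] at h1
  have h2 : (n • y⁻) ⊓ (n • y⁺) = 0 :=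
    inf_nsmul_eq_zero (nsmul_nonneg (negPart_nonneg y) n) (posPart_nonneg y) h1 n
  have hle : n • y⁻ ≤ n • y⁺ := by
    have heq : n • y = n • y⁺ - n • y⁻ := by rw [← smul_sub, posPart_sub_negPart]
    rw [heq] at h
    exact sub_nonneg.1 h
  have hz : n • y⁻ = 0 := by rw [← inf_eq_left.2 hle, h2]
  have : y⁻ ≤ 0 := by
    calc y⁻ = 1 • y⁻ := (one_nsmul _).symm
      _ ≤ n • y⁻ := nsmul_le_nsmul_left (negPart_nonneg y) hn
      _ = 0 := hz
  exact negPart_eq_zero.1 (le_antisymm this (negPart_nonneg y))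

lemma real_smul_nonneg {c : ℝ} (hc : 0 ≤ c) {x : X} (hx : 0 ≤ x) : 0 ≤ c • x := by
  -- rationals first
  have hq : ∀ q : ℚ, 0 ≤ q → 0 ≤ (q : ℝ) • x := by
    intro q hq0
    have hden : 0 < q.den := q.pos
    have hnum : 0 ≤ q.num := Rat.num_nonneg.2 hq0
    apply nonneg_of_nsmul_nonneg hden
    have : (q.den : ℕ) • ((q:ℝ) • x) = (q.num.toNat : ℕ) • x := by
      rw [← Nat.cast_smul_eq_nsmul ℝ, ← Nat.cast_smul_eq_nsmul ℝ, smul_smul]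
      congr 1
      have : ((q.den : ℝ) * q) = (q.num : ℝ) := by
        rw [mul_comm]
        exact_mod_cast Rat.mul_den_eq_num q
      rw [this]
      have h2 : (q.num.toNat : ℤ) = q.num := Int.toNat_of_nonneg hnum
      exact_mod_cast congrArg (fun z : ℤ => (z : ℝ)) h2.symm
    rw [this]
    exact nsmul_nonneg hx _
  -- now reals by density
  obtain ⟨q, hq1, hq2⟩ : ∃ q : ℕ → ℚ, (∀ n, c < (q n : ℝ)) ∧ ∀ n, (q n : ℝ) < c + 1/(n+1) := by
    choose q h1 h2 using fun n : ℕ => exists_rat_btwn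
      (show c < c + 1/((n:ℝ)+1) by
        have : (0:ℝ) < 1/((n:ℝ)+1) := by positivity
        linarith)
    exact ⟨q, h1, h2⟩
  have hqpos : ∀ n, 0 ≤ q n := by
    intro n
    have : (0:ℝ) ≤ (q n : ℝ) := le_of_lt (lt_of_le_of_lt hc (hq1 n))
    exact_mod_cast this
  have htend : Tendsto (fun n : ℕ => ((q n : ℝ))) atTop (𝓝 c) := by
    apply tendsto_of_tendsto_of_tendsto_of_le_of_le (tendsto_const_nhds)
      (h := fun n : ℕ => c + 1/((n:ℝ)+1)) ?_ (fun n => le_of_lt (hq1 n))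
      (fun n => le_of_lt (hq2 n))
    have : Tendsto (fun n : ℕ => 1/((n:ℝ)+1)) atTop (𝓝 0) :=
      tendsto_one_div_add_atTop_nhds_zero_nat
    simpa using tendsto_const_nhds.add this
  have : Tendsto (fun n : ℕ => (q n : ℝ) • x) atTop (𝓝 (c • x)) := htend.smul_const x
  exact ge_of_tendsto this (Eventually.of_forall fun n => hq (q n) (hqpos n))

end SmulOrder

section SmulOrder2

variable {X : Type*} [NormedAddCommGroup X] [Lattice X] [IsOrderedAddMonoid X] [HasSolidNorm X] [NormedSpace ℝ X]

lemma real_smul_mono {c : ℝ} (hc : 0 ≤ c) {x y : X} (h : x ≤ y) : c • x ≤ c • y := by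
  have := real_smul_nonneg hc (sub_nonneg.2 h)
  rw [smul_sub] at this
  exact sub_nonneg.1 this

lemma real_smul_sup {c : ℝ} (hc : 0 < c) (x y : X) : c • (x ⊔ y) = (c • x) ⊔ (c • y) := by
  apply le_antisymm
  · have hx : x ≤ c⁻¹ • ((c • x) ⊔ (c • y)) := by
      have := real_smul_mono (le_of_lt (inv_pos.2 hc)) (le_sup_left (a := c • x) (b := c • y))
      rwa [smul_smul, inv_mul_cancel₀ (ne_of_gt hc), one_smul] at this
    have hy : y ≤ c⁻¹ • ((c • x) ⊔ (c • y)) := by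
      have := real_smul_mono (le_of_lt (inv_pos.2 hc)) (le_sup_right (a := c • x) (b := c • y))
      rwa [smul_smul, inv_mul_cancel₀ (ne_of_gt hc), one_smul] at this
    have := real_smul_mono (le_of_lt hc) (sup_le hx hy)
    rwa [smul_smul, mul_inv_cancel₀ (ne_of_gt hc), one_smul] at this
  · exact sup_le (real_smul_mono (le_of_lt hc) le_sup_left)
      (real_smul_mono (le_of_lt hc) le_sup_right)

lemma real_smul_posPart {c : ℝ} (hc : 0 ≤ c) (x : X) : (c • x)⁺ = c • x⁺ := by
  rcases eq_or_lt_of_le hc with rfl | hc'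
  · simp [posPart_def]
  · rw [posPart_def, posPart_def, real_smul_sup hc', smul_zero]

lemma real_smul_abs {c : ℝ} (hc : 0 ≤ c) (x : X) : |c • x| = c • |x| := by
  rcases eq_or_lt_of_le hc with rfl | hc'
  · simp
  · show (c • x) ⊔ -(c • x) = c • (x ⊔ -x)
    rw [real_smul_sup hc', smul_neg]

lemma one_le_real_smul_self {c : ℝ} (hc : 1 ≤ c) {x : X} (hx : 0 ≤ x) : x ≤ c • x := by
  have : 0 ≤ (c - 1) • x := real_smul_nonneg (by linarith) hx
  rw [sub_smul, one_smul] at this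
  exact sub_nonneg.1 this

lemma real_smul_inf {c : ℝ} (hc : 0 < c) (x y : X) : c • (x ⊓ y) = (c • x) ⊓ (c • y) := by
  have h0 : x ⊓ y = -((-x) ⊔ (-y)) := by rw [neg_sup, neg_neg, neg_neg]
  rw [h0, smul_neg, real_smul_sup hc, neg_sup, smul_neg, smul_neg, neg_neg, neg_neg]

/-- Riesz decomposition: if `|w| ≤ a + b` with `a, b ≥ 0` then `w` splits. -/
lemma riesz_decomp {w a b : X} (ha : 0 ≤ a) (hb : 0 ≤ b) (h : |w| ≤ a + b) :
    ∃ p : X, |p| ≤ a ∧ |w - p| ≤ b := by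
  have hw1 : w ≤ a + b := le_trans (le_abs_self w) h
  have hw2 : -w ≤ a + b := le_trans (neg_le_abs w) h
  refine ⟨(w ⊔ (-a)) ⊓ a, ?_, ?_⟩
  · rw [abs_le']
    refine ⟨inf_le_right, ?_⟩
    rw [neg_le]
    exact le_inf le_sup_right (neg_le_self ha)
  · rw [abs_le']
    constructor
    · -- w - p ≤ b ⟸ w - b ≤ p
      have hp : w - b ≤ (w ⊔ (-a)) ⊓ a := by
        refine le_inf (le_trans ?_ le_sup_left) ?_
        · have : (0:X) ≤ b := hb
          calc w - b ≤ w - 0 := by gcongr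
            _ = w := sub_zero w
        · -- w - b ≤ a ⟸ w ≤ a + b
          calc w - b ≤ (a + b) - b := by gcongr
            _ = a := add_sub_cancel_right a b
      calc w - (w ⊔ (-a)) ⊓ a ≤ w - (w - b) := by gcongr
        _ = b := sub_sub_cancel w b
    · -- -(w - p) ≤ b ⟸ p ≤ w + b
      have hp : (w ⊔ (-a)) ⊓ a ≤ w + b := by
        refine le_trans inf_le_left (sup_le (le_add_of_nonneg_right hb) ?_)
        -- -a ≤ w + b ⟸ -w ≤ a + b
        have : -(w + b) ≤ a := by
          rw [neg_add, ← sub_eq_add_neg]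
          calc -w - b ≤ (a + b) - b := by gcongr
            _ = a := add_sub_cancel_right a b
        rw [← neg_neg ((w:X) + b)]
        exact neg_le_neg this
      have : -(w - ((w ⊔ (-a)) ⊓ a)) = ((w ⊔ (-a)) ⊓ a) - w := by abel
      rw [this]
      calc ((w ⊔ (-a)) ⊓ a) - w ≤ (w + b) - w := by gcongr
        _ = b := by abel

end SmulOrder2

section AbsFunctional

variable {X : Type*} [NormedAddCommGroup X] [Lattice X] [IsOrderedAddMonoid X] [HasSolidNorm X] [NormedSpace ℝ X]

lemma absF_bddAbove (f : X →L[ℝ] ℝ) (x : X) :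
    BddAbove ((fun u => f u) '' {u : X | |u| ≤ x}) := by
  refine ⟨‖f‖ * ‖x‖, ?_⟩
  rintro r ⟨u, hu, rfl⟩
  have hx0 : 0 ≤ x := le_trans (abs_nonneg u) hu
  have : ‖u‖ ≤ ‖x‖ := by
    apply norm_le_norm_of_abs_le_abs
    rwa [abs_of_nonneg hx0]
  calc f u ≤ |f u| := le_abs_self _
    _ ≤ ‖f‖ * ‖u‖ := f.le_opNorm u
    _ ≤ ‖f‖ * ‖x‖ := by gcongr

lemma le_absF (f : X →L[ℝ] ℝ) {u x : X} (h : |u| ≤ x) : f u ≤ absFunctional f x :=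
  le_csSup (absF_bddAbove f x) ⟨u, h, rfl⟩

lemma absF_nonneg (f : X →L[ℝ] ℝ) {x : X} (hx : 0 ≤ x) : 0 ≤ absFunctional f x := by
  have := le_absF f (u := 0) (by simpa using hx)
  simpa using this

lemma absF_le (f : X →L[ℝ] ℝ) {x : X} (hx : 0 ≤ x) {C : ℝ}
    (h : ∀ u : X, |u| ≤ x → f u ≤ C) : absFunctional f x ≤ C := by
  apply csSup_le
  · exact ⟨f 0, 0, by simpa using hx, rfl⟩
  · rintro r ⟨u, hu, rfl⟩; exact h u hu

lemma absF_mono (f : X →L[ℝ] ℝ) {a b : X} (ha : 0 ≤ a) (hab : a ≤ b) :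
    absFunctional f a ≤ absFunctional f b :=
  absF_le f ha fun u hu => le_absF f (le_trans hu hab)

lemma abs_apply_le_absF (f : X →L[ℝ] ℝ) (z : X) : |f z| ≤ absFunctional f |z| := by
  rw [abs_le']
  constructor
  · exact le_absF f le_rfl
  · have : f (-z) ≤ absFunctional f |z| := le_absF f (by rw [abs_neg])
    simpa using this

lemma absF_le_norm (f : X →L[ℝ] ℝ) {x : X} (hx : 0 ≤ x) :
    absFunctional f x ≤ ‖f‖ * ‖x‖ := by
  apply absF_le f hx
  intro u hu
  have : ‖u‖ ≤ ‖x‖ := by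
    apply norm_le_norm_of_abs_le_abs; rwa [abs_of_nonneg hx]
  calc f u ≤ |f u| := le_abs_self _
    _ ≤ ‖f‖ * ‖u‖ := f.le_opNorm u
    _ ≤ ‖f‖ * ‖x‖ := by gcongr

lemma absF_zero (f : X →L[ℝ] ℝ) : absFunctional f 0 = 0 :=
  le_antisymm (absF_le f le_rfl fun u hu => by
    have habs : |u| = 0 := le_antisymm hu (abs_nonneg u)
    have : u = 0 := by
      have h1 : u ≤ 0 := le_trans (le_abs_self u) (le_of_eq habs)
      have h2 : -u ≤ 0 := le_trans (neg_le_abs u) (le_of_eq habs)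
      exact le_antisymm h1 (by simpa using h2)
    simp [this]) (absF_nonneg f le_rfl)

lemma absF_add (f : X →L[ℝ] ℝ) {a b : X} (ha : 0 ≤ a) (hb : 0 ≤ b) :
    absFunctional f (a + b) = absFunctional f a + absFunctional f b := by
  apply le_antisymm
  · apply absF_le f (by positivity)
    intro w hw
    obtain ⟨p, hp, hwp⟩ := riesz_decomp ha hb hw
    calc f w = f p + f (w - p) := by rw [← map_add]; congr 1; abel
      _ ≤ absFunctional f a + absFunctional f b := add_le_add (le_absF f hp) (le_absF f hwp)
  · have key : ∀ u : X, |u| ≤ a → f u + absFunctional f b ≤ absFunctional f (a + b) := by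
      intro u hu
      have h2 : absFunctional f b ≤ absFunctional f (a+b) - f u := by
        apply absF_le f hb
        intro v hv
        have : f u + f v ≤ absFunctional f (a+b) := by
          rw [← map_add]
          apply le_absF
          calc |u + v| ≤ |u| + |v| := abs_add_le u v
            _ ≤ a + b := add_le_add hu hv
        linarith
      linarith
    have : absFunctional f a ≤ absFunctional f (a+b) - absFunctional f b := by
      apply absF_le f ha
      intro u hu
      linarith [key u hu]
    linarith

lemma absF_smul (f : X →L[ℝ] ℝ) {c : ℝ} (hc : 0 < c) {x : X} (hx : 0 ≤ x) :
    absFunctional f (c • x) = c * absFunctional f x := by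
  have hgen : ∀ (d : ℝ) (hd : 0 < d) (y : X), 0 ≤ y →
      absFunctional f (d • y) ≤ d * absFunctional f y := by
    intro d hd y hy
    apply absF_le f (real_smul_nonneg hd.le hy)
    intro u hu
    have h1 : |d⁻¹ • u| ≤ y := by
      rw [real_smul_abs (by positivity)]
      have := real_smul_mono (c := d⁻¹) (by positivity) hu
      rwa [smul_smul, inv_mul_cancel₀ hd.ne', one_smul] at this
    have h2 : f u = d * f (d⁻¹ • u) := by
      have : f (d • (d⁻¹ • u)) = d * f (d⁻¹ • u) := by
        rw [map_smul]; rfl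
      rw [← this, smul_smul, mul_inv_cancel₀ hd.ne', one_smul]
    rw [h2]
    exact mul_le_mul_of_nonneg_left (le_absF f h1) hd.le
  apply le_antisymm (hgen c hc x hx)
  have := hgen c⁻¹ (by positivity) (c • x) (real_smul_nonneg hc.le hx)
  rw [smul_smul, inv_mul_cancel₀ hc.ne', one_smul] at this
  have h3 : absFunctional f x ≤ c⁻¹ * absFunctional f (c • x) := this
  calc c * absFunctional f x ≤ c * (c⁻¹ * absFunctional f (c • x)) := by
        have := mul_le_mul_of_nonneg_left h3 hc.le
        exact this
    _ = absFunctional f (c • x) := by field_simp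
end AbsFunctional

section ModCLM

variable {X : Type*} [NormedAddCommGroup X] [Lattice X] [IsOrderedAddMonoid X] [HasSolidNorm X] [NormedSpace ℝ X]

lemma posPart_le_abs' (x : X) : x⁺ ≤ |x| := sup_le (le_abs_self x) (abs_nonneg x)

lemma negPart_le_abs' (x : X) : x⁻ ≤ |x| := by
  rw [← posPart_neg x, ← abs_neg x]; exact posPart_le_abs' (-x)

/-- The decomposition-invariance of `absF x⁺ - absF x⁻`. -/
private lemma absF_decomp_invariant (f : X →L[ℝ] ℝ) {x a b : X} (ha : 0 ≤ a) (hb : 0 ≤ b)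
    (hx : x = a - b) :
    absFunctional f x⁺ - absFunctional f x⁻ = absFunctional f a - absFunctional f b := by
  have key : a + x⁻ = b + x⁺ := by
    have h1 : x⁺ - x⁻ = x := posPart_sub_negPart x
    have h0 : a - b = x⁺ - x⁻ := by rw [h1, hx]
    have h2 := sub_eq_sub_iff_add_eq_add.1 h0
    rw [h2]; abel
  have h3 : absFunctional f a + absFunctional f x⁻ = absFunctional f b + absFunctional f x⁺ := by
    rw [← absF_add f ha (negPart_nonneg x), ← absF_add f hb (posPart_nonneg x), key]
  linarith

/-- The modulus `|f|` of a continuous functional, as a continuous linear map. -/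
noncomputable def modCLM (f : X →L[ℝ] ℝ) : X →L[ℝ] ℝ :=
  LinearMap.mkContinuous
    { toFun := fun x => absFunctional f x⁺ - absFunctional f x⁻
      map_add' := by
        intro x y
        have hx : x + y = (x⁺ + y⁺) - (x⁻ + y⁻) := by
          conv_lhs => rw [← posPart_sub_negPart x, ← posPart_sub_negPart y]
          abel
        show absFunctional f (x+y)⁺ - absFunctional f (x+y)⁻ =
          (absFunctional f x⁺ - absFunctional f x⁻) + (absFunctional f y⁺ - absFunctional f y⁻)
        rw [absF_decomp_invariant f (by positivity) (by positivity) hx,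
          absF_add f (posPart_nonneg x) (posPart_nonneg y),
          absF_add f (negPart_nonneg x) (negPart_nonneg y)]
        ring
      map_smul' := by
        intro c x
        simp only [RingHom.id_apply, smul_eq_mul]
        rcases le_or_gt 0 c with hc | hc
        · rcases eq_or_lt_of_le hc with rfl | hc'
          · simp [absF_zero]
          · rw [real_smul_posPart hc, show (c • x)⁻ = c • x⁻ by
                rw [← posPart_neg, ← posPart_neg x, ← smul_neg, real_smul_posPart hc],
              absF_smul f hc' (posPart_nonneg x), absF_smul f hc' (negPart_nonneg x)]
            ring
        · have hc' : 0 < -c := by linarith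
          have hcx : c • x = (-c) • (-x) := by rw [smul_neg, neg_smul, neg_neg]
          have h1 : (c • x)⁺ = (-c) • x⁻ := by
            rw [hcx, real_smul_posPart hc'.le, posPart_neg]
          have h2 : (c • x)⁻ = (-c) • x⁺ := by
            rw [← posPart_neg (c • x), ← neg_smul, real_smul_posPart hc'.le]
          rw [h1, h2, absF_smul f hc' (negPart_nonneg x), absF_smul f hc' (posPart_nonneg x)]
          ring }
    (2 * ‖f‖)
    (by
      intro x
      simp only [LinearMap.coe_mk, AddHom.coe_mk]
      have h1 : absFunctional f x⁺ ≤ ‖f‖ * ‖x‖ := by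
        refine le_trans (absF_le_norm f (posPart_nonneg x)) ?_
        gcongr
        apply norm_le_norm_of_abs_le_abs
        rw [abs_of_nonneg (posPart_nonneg x)]
        exact posPart_le_abs' x
      have h2 : absFunctional f x⁻ ≤ ‖f‖ * ‖x‖ := by
        refine le_trans (absF_le_norm f (negPart_nonneg x)) ?_
        gcongr
        apply norm_le_norm_of_abs_le_abs
        rw [abs_of_nonneg (negPart_nonneg x)]
        exact negPart_le_abs' x
      have h3 : 0 ≤ absFunctional f x⁺ := absF_nonneg f (posPart_nonneg x)
      have h4 : 0 ≤ absFunctional f x⁻ := absF_nonneg f (negPart_nonneg x)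
      rw [Real.norm_eq_abs, abs_le]
      constructor <;> nlinarith [norm_nonneg x, norm_nonneg f])

lemma modCLM_apply (f : X →L[ℝ] ℝ) (x : X) :
    modCLM f x = absFunctional f x⁺ - absFunctional f x⁻ := rfl

lemma modCLM_apply_of_nonneg (f : X →L[ℝ] ℝ) {x : X} (hx : 0 ≤ x) :
    modCLM f x = absFunctional f x := by
  rw [modCLM_apply, negPart_eq_zero.2 hx, absF_zero, posPart_eq_self.2 hx, sub_zero]

lemma modCLM_nonneg (f : X →L[ℝ] ℝ) {x : X} (hx : 0 ≤ x) : 0 ≤ modCLM f x := by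
  rw [modCLM_apply_of_nonneg f hx]; exact absF_nonneg f hx

/-- A positive continuous functional dominated by `absF f` on the cone has
`absF` dominated by `absF f` on the cone. -/
lemma absF_le_of_pos_le (f g : X →L[ℝ] ℝ) (hgpos : ∀ z : X, 0 ≤ z → 0 ≤ g z)
    (hgle : ∀ z : X, 0 ≤ z → g z ≤ absFunctional f z) {y : X} (hy : 0 ≤ y) :
    absFunctional g y ≤ absFunctional f y := by
  apply absF_le g hy
  intro u hu
  have h1 : g u ≤ g u⁺ := by
    have : 0 ≤ g u⁻ := hgpos _ (negPart_nonneg u)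
    have he : g u⁺ - g u = g u⁻ := by
      rw [← map_sub]
      congr 1
      have h' : u⁺ = u + u⁻ := sub_eq_iff_eq_add.1 (posPart_sub_negPart u)
      rw [h']
      abel
    linarith
  have h2 : g u⁺ ≤ g y := by
    have hmono : 0 ≤ g (y - u⁺) := hgpos _ (sub_nonneg.2 (le_trans (le_trans (posPart_le_abs' u) le_rfl) hu))
    rw [map_sub] at hmono
    linarith
  exact le_trans h1 (le_trans h2 (hgle y hy))

end ModCLM

section FPlus

variable {X : Type*} [NormedAddCommGroup X] [Lattice X] [IsOrderedAddMonoid X] [HasSolidNorm X] [NormedSpace ℝ X]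

/-- Positive part of a functional. -/
noncomputable def fplus (f : X →L[ℝ] ℝ) : X →L[ℝ] ℝ := (2⁻¹ : ℝ) • (modCLM f + f)

/-- Negative part of a functional. -/
noncomputable def fminus (f : X →L[ℝ] ℝ) : X →L[ℝ] ℝ := (2⁻¹ : ℝ) • (modCLM f - f)

lemma fplus_apply (f : X →L[ℝ] ℝ) (x : X) : fplus f x = 2⁻¹ * (modCLM f x + f x) := by
  simp [fplus]; ring

lemma fminus_apply (f : X →L[ℝ] ℝ) (x : X) : fminus f x = 2⁻¹ * (modCLM f x - f x) := by
  simp [fminus]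

lemma abs_apply_le_absF' (f : X →L[ℝ] ℝ) {z : X} (hz : 0 ≤ z) : |f z| ≤ absFunctional f z := by
  have := abs_apply_le_absF f z
  rwa [abs_of_nonneg hz] at this

lemma fplus_nonneg (f : X →L[ℝ] ℝ) {z : X} (hz : 0 ≤ z) : 0 ≤ fplus f z := by
  rw [fplus_apply, modCLM_apply_of_nonneg f hz]
  have := abs_apply_le_absF' f hz
  have h1 : -(f z) ≤ absFunctional f z := le_trans (neg_le_abs _) this
  linarith

lemma fminus_nonneg (f : X →L[ℝ] ℝ) {z : X} (hz : 0 ≤ z) : 0 ≤ fminus f z := by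
  rw [fminus_apply, modCLM_apply_of_nonneg f hz]
  have := abs_apply_le_absF' f hz
  have h1 : f z ≤ absFunctional f z := le_trans (le_abs_self _) this
  linarith

lemma fplus_sub_fminus (f : X →L[ℝ] ℝ) (x : X) : f x = fplus f x - fminus f x := by
  rw [fplus_apply, fminus_apply]; ring

lemma fplus_le_absF (f : X →L[ℝ] ℝ) {z : X} (hz : 0 ≤ z) : fplus f z ≤ absFunctional f z := by
  rw [fplus_apply, modCLM_apply_of_nonneg f hz]
  have h1 : f z ≤ absFunctional f z := le_trans (le_abs_self _) (abs_apply_le_absF' f hz)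
  linarith

lemma fminus_le_absF (f : X →L[ℝ] ℝ) {z : X} (hz : 0 ≤ z) : fminus f z ≤ absFunctional f z := by
  rw [fminus_apply, modCLM_apply_of_nonneg f hz]
  have h1 : -(f z) ≤ absFunctional f z := le_trans (neg_le_abs _) (abs_apply_le_absF' f hz)
  linarith

lemma absF_fplus_le (f : X →L[ℝ] ℝ) {y : X} (hy : 0 ≤ y) :
    absFunctional (fplus f) y ≤ absFunctional f y :=
  absF_le_of_pos_le f (fplus f) (fun z hz => fplus_nonneg f hz)
    (fun z hz => fplus_le_absF f hz) hy

lemma absF_fminus_le (f : X →L[ℝ] ℝ) {y : X} (hy : 0 ≤ y) :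
    absFunctional (fminus f) y ≤ absFunctional f y :=
  absF_le_of_pos_le f (fminus f) (fun z hz => fminus_nonneg f hz)
    (fun z hz => fminus_le_absF f hz) hy

lemma dualDisjoint_mono {f g p q : X →L[ℝ] ℝ} (h : DualDisjoint f g)
    (hp : ∀ y : X, 0 ≤ y → absFunctional p y ≤ absFunctional f y)
    (hq : ∀ y : X, 0 ≤ y → absFunctional q y ≤ absFunctional g y) :
    DualDisjoint p q := by
  intro x hx ε hε
  obtain ⟨y, hy0, hyx, hlt⟩ := h x hx ε hε
  exact ⟨y, hy0, hyx, lt_of_le_of_lt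
    (add_le_add (hp y hy0) (hq _ (sub_nonneg.2 hyx))) hlt⟩

/-- The sliding hump: the truncated sequence is pairwise disjoint. -/
lemma hump_disjoint {v : ℕ → X} {u : X} {σ : ℕ → X}
    (hv : ∀ j, 0 ≤ v j) (hu : 0 ≤ u)
    (hvu : ∀ j, v j ≤ (2 ^ j : ℝ) • u)
    (hσ : ∀ j i, i ≤ j → v i ≤ σ j) :
    ∀ n m, n ≠ m →
      ((v (n+1) - (2 ^ (n+1) : ℝ) • σ n - u)⁺) ⊓ ((v (m+1) - (2 ^ (m+1) : ℝ) • σ m - u)⁺) = 0 := by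
  have key : ∀ n m, n < m →
      ((v (n+1) - (2 ^ (n+1) : ℝ) • σ n - u)⁺) ⊓ ((v (m+1) - (2 ^ (m+1) : ℝ) • σ m - u)⁺) = 0 := by
    intro n m hnm
    set c : ℝ := 2 ^ (m+1) with hc
    have hcpos : (0:ℝ) < c := by positivity
    have hc1 : (1:ℝ) ≤ c := one_le_pow₀ (by norm_num)
    set yn := (v (n+1) - (2 ^ (n+1) : ℝ) • σ n - u)⁺ with hyn
    set ym := (v (m+1) - c • σ m - u)⁺ with hym
    have hyn0 : 0 ≤ yn := posPart_nonneg _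
    have hym0 : 0 ≤ ym := posPart_nonneg _
    have hσn0 : 0 ≤ σ n := le_trans (hv 0) (hσ n 0 (Nat.zero_le n))
    set z : X := c • (v (n+1) - u) with hz
    have h1 : yn ≤ (v (n+1) - u)⁺ := by
      apply posPart_mono
      have hs : (0:X) ≤ (2 ^ (n+1) : ℝ) • σ n := real_smul_nonneg (by positivity) hσn0
      calc v (n+1) - (2 ^ (n+1) : ℝ) • σ n - u ≤ v (n+1) - 0 - u := by gcongr
        _ = v (n+1) - u := by abel
    have h2 : ym ≤ z⁻ := by
      have step1 : v (m+1) - c • σ m - u ≤ c • u - c • v (n+1) := by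
        have ha : v (m+1) ≤ c • u := hvu (m+1)
        have hb : c • v (n+1) ≤ c • σ m := real_smul_mono hcpos.le (hσ m (n+1) hnm)
        calc v (m+1) - c • σ m - u ≤ c • u - c • v (n+1) - 0 :=
              sub_le_sub (sub_le_sub ha hb) hu
          _ = c • u - c • v (n+1) := by abel
      have step2 : (c • u - c • v (n+1) : X) = -z := by
        rw [hz, smul_sub]; abel
      calc ym ≤ (c • u - c • v (n+1))⁺ := posPart_mono step1
        _ = (-z)⁺ := by rw [step2]
        _ = z⁻ := posPart_neg z
    set w := yn ⊓ ym with hw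
    have hw0 : 0 ≤ w := le_inf hyn0 hym0
    have hcw : c • w ≤ z⁺ := by
      calc c • w ≤ c • ((v (n+1) - u)⁺) := real_smul_mono hcpos.le (le_trans inf_le_left h1)
        _ = z⁺ := (real_smul_posPart hcpos.le _).symm
    have hwz : w ≤ z⁺ ⊓ z⁻ :=
      le_inf (le_trans (one_le_real_smul_self hc1 hw0) hcw) (le_trans inf_le_right h2)
    rw [posPart_inf_negPart_eq_zero z] at hwz
    exact le_antisymm hwz hw0
  intro n m hnm
  rcases lt_or_gt_of_ne hnm with h | h
  · exact key n m h
  · rw [inf_comm]; exact key m n h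

end FPlus

section Main

variable {E F : Type*} [NormedAddCommGroup E] [Lattice E] [IsOrderedAddMonoid E] [HasSolidNorm E] [NormedSpace ℝ E]
  [CompleteSpace E] [NormedAddCommGroup F] [Lattice F] [IsOrderedAddMonoid F] [HasSolidNorm F] [NormedSpace ℝ F] [CompleteSpace F]

lemma mem_Icc_of_abs_le {X : Type*} [NormedAddCommGroup X] [Lattice X] [IsOrderedAddMonoid X] [HasSolidNorm X] {z s : X} (h : |z| ≤ s) :
    z ∈ Set.Icc (-s) s :=
  ⟨neg_le.1 (le_trans (neg_le_abs z) h), le_trans (le_abs_self z) h⟩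

lemma abs_le_of_mem_Icc {X : Type*} [NormedAddCommGroup X] [Lattice X] [IsOrderedAddMonoid X] [HasSolidNorm X] {z c d : X}
    (h : z ∈ Set.Icc c d) : |z| ≤ |c| + |d| := by
  apply abs_le'.2
  constructor
  · exact le_trans h.2 (le_trans (le_abs_self d) (le_add_of_nonneg_left (abs_nonneg c)))
  · have : -z ≤ -c := neg_le_neg h.1
    exact le_trans this (le_trans (neg_le_abs c) (le_add_of_nonneg_right (abs_nonneg d)))

/-- An order bounded operator admits, for each `s`, a positive bound dominating
`|T w|` for all `|w| ≤ s`. -/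
lemma exists_orderBound (T : E →ₗ[ℝ] F) (hT : OrderBoundedOperator T) (s : E) :
    ∃ b : F, 0 ≤ b ∧ ∀ w : E, |w| ≤ s → |T w| ≤ b := by
  obtain ⟨c, d, hcd⟩ := hT (-s) s
  refine ⟨|c| + |d|, add_nonneg (abs_nonneg c) (abs_nonneg d), fun w hw => ?_⟩
  have : T w ∈ Set.Icc c d := hcd ⟨w, mem_Icc_of_abs_le hw, rfl⟩
  exact abs_le_of_mem_Icc this

/-- An order bounded operator maps norm bounded sets to norm bounded sets
(given a solid-norm target). -/
lemma orderBounded_image_bounded (T : E →ₗ[ℝ] F) (hT : OrderBoundedOperator T)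
    {A : Set E} (hAb : Bornology.IsBounded A) : Bornology.IsBounded (T '' A) := by
  obtain ⟨M, hM⟩ := hAb.exists_norm_le
  rw [isBounded_iff_forall_norm_le]
  by_contra hnb
  push_neg at hnb
  have hbad : ∀ k : ℕ, ∃ z ∈ A, (2:ℝ)^k * k < ‖T z‖ := by
    intro k
    obtain ⟨y, hy, hyk⟩ := hnb ((2:ℝ)^k * k)
    obtain ⟨z, hzA, rfl⟩ := hy
    exact ⟨z, hzA, hyk⟩
  choose a haA hak using hbad
  have hterm : ∀ i : ℕ, ‖((2:ℝ)⁻¹)^i • |a i|‖ ≤ ((2:ℝ)⁻¹)^i * M := by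
    intro i
    rw [norm_smul, Real.norm_eq_abs, abs_pow]
    have : ‖|a i|‖ = ‖a i‖ := norm_abs_eq_norm (a i)
    rw [this]
    have h2 : |(2:ℝ)⁻¹| = 2⁻¹ := by norm_num
    rw [h2]
    gcongr
    exact hM _ (haA i)
  have hsummable : Summable (fun i : ℕ => ((2:ℝ)⁻¹)^i • |a i|) := by
    apply Summable.of_norm_bounded (Summable.mul_right M
      (summable_geometric_of_lt_one (by norm_num) (by norm_num))) hterm
  set u0 : E := ∑' i, ((2:ℝ)⁻¹)^i • |a i| with hu0
  have htermnn : ∀ i : ℕ, 0 ≤ ((2:ℝ)⁻¹)^i • |a i| :=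
    fun i => real_smul_nonneg (by positivity) (abs_nonneg _)
  have hle : ∀ k : ℕ, ((2:ℝ)⁻¹)^k • |a k| ≤ u0 :=
    fun k => hsummable.le_tsum k (fun j _ => htermnn j)
  obtain ⟨b, hb0, hb⟩ := exists_orderBound T hT u0
  have hbk : ∀ k : ℕ, ‖T (((2:ℝ)⁻¹)^k • a k)‖ ≤ ‖b‖ := by
    intro k
    have h1 : |((2:ℝ)⁻¹)^k • a k| ≤ u0 := by
      rw [real_smul_abs (by positivity)]; exact hle k
    have h2 := hb _ h1
    apply norm_le_norm_of_abs_le_abs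
    rwa [abs_of_nonneg hb0]
  have : ∀ k : ℕ, (k:ℝ) < ‖b‖ := by
    intro k
    have h3 : T (((2:ℝ)⁻¹)^k • a k) = ((2:ℝ)⁻¹)^k • T (a k) := map_smul T _ _
    have h4 : ‖T (((2:ℝ)⁻¹)^k • a k)‖ = ((2:ℝ)⁻¹)^k * ‖T (a k)‖ := by
      rw [h3, norm_smul, Real.norm_eq_abs, abs_pow]
      congr 1
      rw [abs_of_nonneg]
      norm_num
    have h5 : ((2:ℝ)⁻¹)^k * ((2:ℝ)^k * k) < ((2:ℝ)⁻¹)^k * ‖T (a k)‖ :=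
      mul_lt_mul_of_pos_left (hak k) (by positivity)
    have h6 : ((2:ℝ)⁻¹)^k * ((2:ℝ)^k * k) = k := by
      rw [← mul_assoc, ← mul_pow]
      norm_num
    calc (k:ℝ) = ((2:ℝ)⁻¹)^k * ((2:ℝ)^k * k) := h6.symm
      _ < ((2:ℝ)⁻¹)^k * ‖T (a k)‖ := h5
      _ = ‖T (((2:ℝ)⁻¹)^k • a k)‖ := h4.symm
      _ ≤ ‖b‖ := hbk k
  obtain ⟨k, hk⟩ := exists_nat_gt ‖b‖
  exact absurd (this k) (by linarith)

end Main

/-- For Banach lattices `E, F` with `F` having property (d), an order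
bounded operator `T : E → F` and a norm bounded solid set `A ⊆ E`: `T(A)` is almost
limited iff `f n (T (x n)) → 0` for every disjoint sequence `(x n)` in `A ∩ E⁺` and every
disjoint weak* null sequence `(f n)` of positive functionals in `F*`. -/
theorem statement10 {E F : Type*} [NormedAddCommGroup E] [Lattice E] [IsOrderedAddMonoid E] [HasSolidNorm E] [NormedSpace ℝ E]
    [CompleteSpace E] [NormedAddCommGroup F] [Lattice F] [IsOrderedAddMonoid F] [HasSolidNorm F] [NormedSpace ℝ F] [CompleteSpace F]
    (hF : PropertyD F)
    (T : E →ₗ[ℝ] F) (hT : OrderBoundedOperator T)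
    (A : Set E) (hAb : Bornology.IsBounded A) (hAs : IsSolid A) :
    AlmostLimitedSet (T '' A) ↔
      ∀ x : ℕ → E, (∀ n, x n ∈ A) → (∀ n, 0 ≤ x n) → LatticeDisjointSeq x →
        ∀ f : ℕ → F →L[ℝ] ℝ, (∀ n, PositiveFunctional (f n)) → DualDisjointSeq f →
          WeakStarNull f →
            Filter.Tendsto (fun n => f n (T (x n))) Filter.atTop (nhds (0 : ℝ)) := by
  constructor
  · rintro ⟨-, hal⟩ x hxA hx0 hxd f hfpos hfd hfw
    have hu := hal f hfd hfw
    rw [Metric.tendstoUniformlyOn_iff] at hu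
    rw [Metric.tendsto_nhds]
    intro ε hε
    filter_upwards [hu ε hε] with n hn
    have h2 := hn (T (x n)) ⟨x n, hxA n, rfl⟩
    rw [Real.dist_eq] at h2 ⊢
    simpa [abs_sub_comm] using h2
  · intro hH
    refine ⟨orderBounded_image_bounded T hT hAb, ?_⟩
    intro f hfd hfw
    have hAWN := hF f hfd hfw
    by_contra hcon
    rw [Metric.tendstoUniformlyOn_iff] at hcon
    push_neg at hcon
    obtain ⟨ε, hε, hfreq⟩ := hcon
    have hfreq' : ∃ᶠ nn in atTop, ∃ z ∈ A, ε ≤ |f nn (T z)| := by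
      apply hfreq.mono
      intro nn hnn
      obtain ⟨y, ⟨z, hzA, rfl⟩, hval⟩ := hnn
      refine ⟨z, hzA, ?_⟩
      rw [Real.dist_eq] at hval
      simpa [abs_sub_comm] using hval
    obtain ⟨n, hnmono, hbad⟩ := Filter.extraction_of_frequently_atTop hfreq'
    choose x hxA2 hxval using hbad
    have haA : ∀ k, |x k| ∈ A := fun k => hAs (x k) (hxA2 k) |x k| (by rw [abs_abs])
    set a : ℕ → E := fun k => |x k| with ha
    have ha0 : ∀ k, 0 ≤ a k := fun k => abs_nonneg _
    choose bof hbof0 hbofle using exists_orderBound T hT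
    have habsT : ∀ (g : F →L[ℝ] ℝ) (s w : E), |w| ≤ s → |g (T w)| ≤ absFunctional g (bof s) :=
      fun g s w hws =>
        le_trans (abs_apply_le_absF g (T w)) (absF_mono g (abs_nonneg _) (hbofle s w hws))
    have hchoice : ∀ (J : ℕ) (s : E), ∃ m', J < m' ∧
        absFunctional (f (n m')) (bof s) < ε/4 := by
      intro J s
      have h1 : Tendsto (fun k => absFunctional (f (n k)) (bof s)) atTop (𝓝 0) :=
        (hAWN (bof s) (hbof0 s)).comp hnmono.tendsto_atTop
      have h2 : ∀ᶠ k in atTop, absFunctional (f (n k)) (bof s) < ε/4 :=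
        h1.eventually_lt_const (by linarith)
      exact ((eventually_gt_atTop J).and h2).exists
    obtain ⟨mσ, hmσ0, hmσS⟩ : ∃ g : ℕ → ℕ × E, g 0 = (0, a 0) ∧ ∀ j, g (j+1) =
        ⟨Classical.choose (hchoice (g j).1 ((2:ℝ)^(j+1) • (g j).2)),
         (g j).2 + a (Classical.choose (hchoice (g j).1 ((2:ℝ)^(j+1) • (g j).2)))⟩ :=
      ⟨fun j => Nat.rec ((0:ℕ), a 0) (fun j st =>
        ⟨Classical.choose (hchoice st.1 ((2:ℝ)^(j+1) • st.2)),
         st.2 + a (Classical.choose (hchoice st.1 ((2:ℝ)^(j+1) • st.2)))⟩) j,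
       rfl, fun j => rfl⟩
    set m : ℕ → ℕ := fun j => (mσ j).1 with hm
    set σ : ℕ → E := fun j => (mσ j).2 with hσd
    have hm0 : m 0 = 0 := by show (mσ 0).1 = 0; rw [hmσ0]
    have hσ0 : σ 0 = a 0 := by show (mσ 0).2 = a 0; rw [hmσ0]
    have hmlt : ∀ j, m j < m (j+1) := by
      intro j
      have h2 := (Classical.choose_spec (hchoice (mσ j).1 ((2:ℝ)^(j+1) • (mσ j).2))).1
      have h1 : (mσ (j+1)).1 = Classical.choose (hchoice (mσ j).1 ((2:ℝ)^(j+1) • (mσ j).2)) :=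
        congrArg Prod.fst (hmσS j)
      show (mσ j).1 < (mσ (j+1)).1
      rw [h1]
      exact h2
    have hmabs : ∀ j, absFunctional (f (n (m (j+1)))) (bof ((2:ℝ)^(j+1) • σ j)) < ε/4 := by
      intro j
      have h2 := (Classical.choose_spec (hchoice (mσ j).1 ((2:ℝ)^(j+1) • (mσ j).2))).2
      have h1 : (mσ (j+1)).1 = Classical.choose (hchoice (mσ j).1 ((2:ℝ)^(j+1) • (mσ j).2)) :=
        congrArg Prod.fst (hmσS j)
      show absFunctional (f (n ((mσ (j+1)).1))) (bof ((2:ℝ)^(j+1) • (mσ j).2)) < ε/4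
      rw [h1]
      exact h2
    have hσS : ∀ j, σ (j+1) = σ j + a (m (j+1)) := by
      intro j
      have h1 : (mσ (j+1)).2 = (mσ j).2 + a (Classical.choose
          (hchoice (mσ j).1 ((2:ℝ)^(j+1) • (mσ j).2))) := congrArg Prod.snd (hmσS j)
      have h2 : (mσ (j+1)).1 = Classical.choose (hchoice (mσ j).1 ((2:ℝ)^(j+1) • (mσ j).2)) :=
        congrArg Prod.fst (hmσS j)
      show (mσ (j+1)).2 = (mσ j).2 + a ((mσ (j+1)).1)
      rw [h2]
      exact h1
    have hmmono : StrictMono m := strictMono_nat_of_lt_succ hmlt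
    set v : ℕ → E := fun j => a (m j) with hv
    have hv0 : ∀ j, 0 ≤ v j := fun j => ha0 _
    have hσnn : ∀ j, 0 ≤ σ j := by
      intro j
      induction j with
      | zero => rw [hσ0]; exact ha0 0
      | succ j ih =>
        rw [hσS j]
        exact add_nonneg ih (ha0 _)
    have hσ_ge : ∀ j i, i ≤ j → v i ≤ σ j := by
      intro j
      induction j with
      | zero =>
        intro i hi
        rw [Nat.le_zero] at hi
        subst hi
        rw [hσ0]
        show a (m 0) ≤ a 0
        rw [hm0]
      | succ j ih =>
        intro i hi
        rcases eq_or_lt_of_le hi with rfl | hlt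
        · rw [hσS j]
          exact le_add_of_nonneg_left (hσnn j)
        · have h1 : i ≤ j := by omega
          rw [hσS j]
          exact le_trans (ih i h1) (le_add_of_nonneg_right (ha0 _))
    obtain ⟨M, hM⟩ := hAb.exists_norm_le
    have htermnn : ∀ i : ℕ, 0 ≤ ((2:ℝ)⁻¹)^i • v i :=
      fun i => real_smul_nonneg (by positivity) (hv0 i)
    have hsummable : Summable (fun i : ℕ => ((2:ℝ)⁻¹)^i • v i) := by
      apply Summable.of_norm_bounded (Summable.mul_right M
        (summable_geometric_of_lt_one (r := (2:ℝ)⁻¹) (by norm_num) (by norm_num)))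
      intro i
      rw [norm_smul, Real.norm_eq_abs, abs_pow]
      have h2 : |(2:ℝ)⁻¹| = 2⁻¹ := by norm_num
      rw [h2]
      gcongr
      exact hM _ (haA _)
    set u : E := ∑' i, ((2:ℝ)⁻¹)^i • v i with hud
    have hu0 : 0 ≤ u := tsum_nonneg htermnn
    have hvu : ∀ j, v j ≤ (2:ℝ)^j • u := by
      intro j
      have h1 : ((2:ℝ)⁻¹)^j • v j ≤ u := hsummable.le_tsum j (fun i _ => htermnn i)
      have h2 := real_smul_mono (c := (2:ℝ)^j) (by positivity) h1
      rwa [smul_smul, ← mul_pow, mul_inv_cancel₀ (two_ne_zero), one_pow, one_smul] at h2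
    set y : ℕ → E := fun j => (v (j+1) - (2:ℝ)^(j+1) • σ j - u)⁺ with hy
    have hydisj : ∀ i k, i ≠ k → y i ⊓ y k = 0 := by
      intro i k hik
      exact hump_disjoint hv0 hu0 hvu hσ_ge i k hik
    have hy0 : ∀ j, 0 ≤ y j := fun j => posPart_nonneg _
    have hyv : ∀ j, y j ≤ v (j+1) := by
      intro j
      have harg : v (j+1) - (2:ℝ)^(j+1) • σ j - u ≤ v (j+1) := by
        have h1 : (0:E) ≤ (2:ℝ)^(j+1) • σ j := real_smul_nonneg (by positivity) (hσnn j)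
        calc v (j+1) - (2:ℝ)^(j+1) • σ j - u ≤ v (j+1) - 0 - 0 := by gcongr
          _ = v (j+1) := by abel
      calc y j = (v (j+1) - (2:ℝ)^(j+1) • σ j - u) ⊔ 0 := rfl
        _ ≤ v (j+1) ⊔ 0 := sup_le_sup_right harg 0
        _ = v (j+1) := sup_eq_left.2 (hv0 (j+1))
    have hdecomp : ∀ j, ∃ p q r : E, x (m (j+1)) = p + q + r ∧ |p| ≤ y j ∧
        |q| ≤ (2:ℝ)^(j+1) • σ j ∧ |r| ≤ u := by
      intro j
      have hs0 : (0:E) ≤ (2:ℝ)^(j+1) • σ j := real_smul_nonneg (by positivity) (hσnn j)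
      have hbig : |x (m (j+1))| ≤ y j + ((2:ℝ)^(j+1) • σ j + u) := by
        have h1 : v (j+1) - ((2:ℝ)^(j+1) • σ j + u) ≤ y j := by
          have he : v (j+1) - (2:ℝ)^(j+1) • σ j - u
              = v (j+1) - ((2:ℝ)^(j+1) • σ j + u) := by abel
          rw [← he]
          exact le_sup_left
        exact sub_le_iff_le_add.1 h1
      obtain ⟨p, hp, hwp⟩ := riesz_decomp (hy0 j) (add_nonneg hs0 hu0) hbig
      obtain ⟨q, hq, hr⟩ := riesz_decomp hs0 hu0 hwp
      exact ⟨p, q, x (m (j+1)) - p - q, by abel, hp, hq, hr⟩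
    choose p q r hpqr hpy hqs hru using hdecomp
    set N' : ℕ → ℕ := fun j => n (m (j+1)) with hN'
    have hN'mono : StrictMono N' := fun i k hik => hnmono (hmmono (by omega))
    -- generic application of the hypothesis hH
    have happly : ∀ (pc : ℕ → E), (∀ j, 0 ≤ pc j) → (∀ j, pc j ≤ y j) →
        ∀ (G : ℕ → F →L[ℝ] ℝ), (∀ j z, 0 ≤ z → 0 ≤ G j z) →
        (∀ j z, 0 ≤ z → G j z ≤ absFunctional (f (N' j)) z) →
        (∀ z : F, Tendsto (fun j => G j z) atTop (𝓝 0)) →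
        Tendsto (fun j => G j (T (pc j))) atTop (𝓝 0) := by
      intro pc hpc0 hpcy G hGpos hGle hGw
      apply hH pc
      · intro j
        apply hAs (x (m (j+1))) (hxA2 _) (pc j)
        rw [abs_of_nonneg (hpc0 j)]
        exact le_trans (hpcy j) (hyv j)
      · exact hpc0
      · intro i k hik
        refine le_antisymm ?_ (le_inf (abs_nonneg _) (abs_nonneg _))
        rw [abs_of_nonneg (hpc0 i), abs_of_nonneg (hpc0 k), ← hydisj i k hik]
        exact inf_le_inf (hpcy i) (hpcy k)
      · exact fun j => hGpos j
      · intro i k hik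
        exact dualDisjoint_mono (hfd (N' i) (N' k) (fun hc => hik (hN'mono.injective hc)))
          (fun z hz => absF_le_of_pos_le (f (N' i)) (G i) (hGpos i) (hGle i) hz)
          (fun z hz => absF_le_of_pos_le (f (N' k)) (G k) (hGpos k) (hGle k) hz)
      · exact hGw
    -- weak* null of the positive/negative parts along N'
    have hwplus : ∀ z : F, Tendsto (fun j => fplus (f (N' j)) z) atTop (𝓝 0) := by
      intro z
      have h1 := (hAWN z⁺ (posPart_nonneg z)).comp hN'mono.tendsto_atTop
      have h2 := (hAWN z⁻ (negPart_nonneg z)).comp hN'mono.tendsto_atTop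
      have h3 := (hfw z).comp hN'mono.tendsto_atTop
      have h4 := ((h1.sub h2).add h3).const_mul (2⁻¹:ℝ)
      have he : (fun j => fplus (f (N' j)) z) = fun j => (2⁻¹:ℝ) *
          ((absFunctional (f (N' j)) z⁺ - absFunctional (f (N' j)) z⁻) + f (N' j) z) := by
        funext j
        rw [fplus_apply, modCLM_apply]
      rw [he]
      simpa using h4
    have hwminus : ∀ z : F, Tendsto (fun j => fminus (f (N' j)) z) atTop (𝓝 0) := by
      intro z
      have h1 := (hAWN z⁺ (posPart_nonneg z)).comp hN'mono.tendsto_atTop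
      have h2 := (hAWN z⁻ (negPart_nonneg z)).comp hN'mono.tendsto_atTop
      have h3 := (hfw z).comp hN'mono.tendsto_atTop
      have h4 := ((h1.sub h2).sub h3).const_mul (2⁻¹:ℝ)
      have he : (fun j => fminus (f (N' j)) z) = fun j => (2⁻¹:ℝ) *
          ((absFunctional (f (N' j)) z⁺ - absFunctional (f (N' j)) z⁻) - f (N' j) z) := by
        funext j
        rw [fminus_apply, modCLM_apply]
      rw [he]
      simpa using h4
    -- four tendsto's
    have hppy : ∀ j, (p j)⁺ ≤ y j := fun j => le_trans (posPart_le_abs' _) (hpy j)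
    have hpmy : ∀ j, (p j)⁻ ≤ y j := fun j => le_trans (negPart_le_abs' _) (hpy j)
    have t11 := happly (fun j => (p j)⁺) (fun j => posPart_nonneg _) hppy
      (fun j => fplus (f (N' j))) (fun j z hz => fplus_nonneg _ hz)
      (fun j z hz => fplus_le_absF _ hz) hwplus
    have t12 := happly (fun j => (p j)⁻) (fun j => negPart_nonneg _) hpmy
      (fun j => fplus (f (N' j))) (fun j z hz => fplus_nonneg _ hz)
      (fun j z hz => fplus_le_absF _ hz) hwplus
    have t21 := happly (fun j => (p j)⁺) (fun j => posPart_nonneg _) hppy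
      (fun j => fminus (f (N' j))) (fun j z hz => fminus_nonneg _ hz)
      (fun j z hz => fminus_le_absF _ hz) hwminus
    have t22 := happly (fun j => (p j)⁻) (fun j => negPart_nonneg _) hpmy
      (fun j => fminus (f (N' j))) (fun j z hz => fminus_nonneg _ hz)
      (fun j z hz => fminus_le_absF _ hz) hwminus
    have heq : ∀ j, f (N' j) (T (p j)) =
        (fplus (f (N' j)) (T ((p j)⁺)) - fminus (f (N' j)) (T ((p j)⁺)))
        - (fplus (f (N' j)) (T ((p j)⁻)) - fminus (f (N' j)) (T ((p j)⁻))) := by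
      intro j
      have hps : T (p j) = T ((p j)⁺) - T ((p j)⁻) := by
        rw [← map_sub, posPart_sub_negPart]
      calc f (N' j) (T (p j)) = f (N' j) (T ((p j)⁺)) - f (N' j) (T ((p j)⁻)) := by
            rw [hps, map_sub]
        _ = _ := by
            rw [← fplus_sub_fminus (f (N' j)) (T ((p j)⁺)),
              ← fplus_sub_fminus (f (N' j)) (T ((p j)⁻))]
    have hptend : Tendsto (fun j => |f (N' j) (T (p j))|) atTop (𝓝 0) := by
      have h5 := (t11.sub t21).sub (t12.sub t22)
      have he : (fun j => f (N' j) (T (p j))) =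
          fun j => (fplus (f (N' j)) (T ((p j)⁺)) - fminus (f (N' j)) (T ((p j)⁺)))
          - (fplus (f (N' j)) (T ((p j)⁻)) - fminus (f (N' j)) (T ((p j)⁻))) := funext heq
      have h6 : Tendsto (fun j => f (N' j) (T (p j))) atTop (𝓝 0) := by
        rw [he]
        simpa using h5
      simpa using h6.abs
    have hrtend : Tendsto (fun j => absFunctional (f (N' j)) (bof u)) atTop (𝓝 0) :=
      (hAWN (bof u) (hbof0 u)).comp hN'mono.tendsto_atTop
    have hεle : ∀ j, ε ≤ |f (N' j) (T (p j))| + ε/4 + absFunctional (f (N' j)) (bof u) := by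
      intro j
      have h0 : ε ≤ |f (n (m (j+1))) (T (x (m (j+1))))| := hxval (m (j+1))
      have hsplit : T (x (m (j+1))) = T (p j) + T (q j) + T (r j) := by
        rw [← map_add, ← map_add, ← hpqr j]
      have htri : |f (N' j) (T (x (m (j+1))))| ≤
          |f (N' j) (T (p j))| + |f (N' j) (T (q j))| + |f (N' j) (T (r j))| := by
        rw [hsplit, map_add, map_add]
        exact abs_add_three _ _ _
      have hq' : |f (N' j) (T (q j))| ≤ ε/4 :=
        le_of_lt (lt_of_le_of_lt (habsT _ _ _ (hqs j)) (hmabs j))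
      have hr' : |f (N' j) (T (r j))| ≤ absFunctional (f (N' j)) (bof u) :=
        habsT _ _ _ (hru j)
      have h0' : ε ≤ |f (N' j) (T (x (m (j+1))))| := h0
      linarith
    have hev : ∀ᶠ j in atTop, |f (N' j) (T (p j))| +
        absFunctional (f (N' j)) (bof u) < ε/2 := by
      have h7 := hptend.add hrtend
      rw [add_zero] at h7
      exact h7.eventually_lt_const (by linarith)
    obtain ⟨j, hj⟩ := hev.exists
    have h8 := hεle j
    linarith
end

section
/- Let X be a Banach space and E a Banach lattice. If E satisfies the property (d), then every semi-compact operator T : X → E is almost limited; and if the lattice operations of E* are weak* sequentially continuous, then every semi-compact operator T : X → E is limited. -/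
open Filter Topology Metric Pointwise

lemma abs_apply_le_absFunctional {E : Type*} [NormedAddCommGroup E] [Lattice E] [IsOrderedAddMonoid E] [HasSolidNorm E] [NormedSpace ℝ E]
    (f : E →L[ℝ] ℝ) {u y : E} (hu : 0 ≤ u) (hy : |y| ≤ u) : |f y| ≤ absFunctional f u := by
  have hbdd : BddAbove ((fun v => f v) '' {v : E | |v| ≤ u}) := by
    refine ⟨‖f‖ * ‖u‖, ?_⟩
    rintro _ ⟨v, hv, rfl⟩
    have h1 : ‖v‖ ≤ ‖u‖ := by
      have : |v| ≤ |u| := by rwa [abs_of_nonneg hu]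
      exact HasSolidNorm.solid this
    calc f v ≤ |f v| := le_abs_self _
      _ = ‖f v‖ := (Real.norm_eq_abs _).symm
      _ ≤ ‖f‖ * ‖v‖ := f.le_opNorm v
      _ ≤ ‖f‖ * ‖u‖ := by gcongr
  have h1 : f y ≤ absFunctional f u :=
    le_csSup hbdd ⟨y, hy, rfl⟩
  have h2 : -(f y) ≤ absFunctional f u := by
    have : (-y) ∈ {v : E | |v| ≤ u} := by simpa [abs_neg] using hy
    have := le_csSup hbdd ⟨-y, this, rfl⟩
    simpa [absFunctional] using this
  exact abs_le.2 ⟨neg_le.mp h2, h1⟩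

lemma key_uniform {X E : Type*} [NormedAddCommGroup X] [NormedSpace ℝ X]
    [NormedAddCommGroup E] [Lattice E] [IsOrderedAddMonoid E] [HasSolidNorm E] [NormedSpace ℝ E] [CompleteSpace E]
    (T : X →L[ℝ] E)
    (hsc : ∀ ε : ℝ, 0 < ε → ∃ u : E, 0 ≤ u ∧
      T '' Metric.closedBall 0 1 ⊆ Set.Icc (-u) u + Metric.closedBall (0 : E) ε)
    (f : ℕ → E →L[ℝ] ℝ) (hw : WeakStarNull f) (habs : AbsWeakStarNull f) :
    TendstoUniformlyOn (fun n x => f n x) (fun _ => (0 : ℝ)) atTop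
      (T '' Metric.closedBall 0 1) := by
  -- uniform bound on ‖f n‖ by Banach–Steinhaus
  obtain ⟨M, hM⟩ : ∃ M : ℝ, ∀ n, ‖f n‖ ≤ M := by
    apply banach_steinhaus
    intro x
    have := (hw x).norm
    obtain ⟨C, hC⟩ := this.bddAbove_range
    exact ⟨C, fun n => hC ⟨n, rfl⟩⟩
  have hM0 : 0 ≤ M := le_trans (norm_nonneg _) (hM 0)
  rw [Metric.tendstoUniformlyOn_iff]
  intro ε hε
  set δ : ℝ := ε / (2 * (M + 1)) with hδdef
  have hδ : 0 < δ := by positivity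
  obtain ⟨u, hu0, hu⟩ := hsc δ hδ
  have habsu := habs u hu0
  have hev : ∀ᶠ n in atTop, absFunctional (f n) u < ε / 2 := by
    have := habsu
    rw [Metric.tendsto_atTop] at this
    obtain ⟨N, hN⟩ := this (ε / 2) (by positivity)
    exact Filter.eventually_atTop.2 ⟨N, fun n hn => by
      have := hN n hn
      rw [Real.dist_eq, sub_zero] at this
      exact lt_of_abs_lt this⟩
  filter_upwards [hev] with n hn x hx
  rw [dist_comm, Real.dist_eq, sub_zero]
  obtain ⟨y, hy, z, hz, rfl⟩ := hu hx
  have hy' : |y| ≤ u := by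
    rw [abs]
    exact sup_le hy.2 (neg_le.mp hy.1)
  have hz' : ‖z‖ ≤ δ := by simpa [Metric.mem_closedBall, dist_zero_right] using hz
  calc |f n (y + z)| ≤ |f n y| + |f n z| := by
        rw [map_add]; exact abs_add_le _ _
    _ ≤ absFunctional (f n) u + ‖f n‖ * ‖z‖ := by
        gcongr
        · exact abs_apply_le_absFunctional (f n) hu0 hy'
        · rw [← Real.norm_eq_abs]; exact (f n).le_opNorm z
    _ ≤ ε / 2 + M * δ := by
        gcongr <;> first | exact hn.le | exact hM n | exact hz' | positivity
    _ < ε := by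
        have hlt : M * δ < ε / 2 := by
          rw [hδdef, mul_div_assoc']
          rw [div_lt_div_iff₀ (by positivity) (by norm_num)]
          nlinarith
        linarith

/-- If `E` has property (d), then every semi-compact operator `T : X → E`
is almost limited; if the lattice operations of `E*` are weak* sequentially continuous,
then every semi-compact operator `T : X → E` is limited. -/
theorem statement18 {X E : Type*} [NormedAddCommGroup X] [NormedSpace ℝ X]
    [CompleteSpace X] [NormedAddCommGroup E] [Lattice E] [IsOrderedAddMonoid E] [HasSolidNorm E] [NormedSpace ℝ E] [CompleteSpace E]
    (T : X →L[ℝ] E)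
    (hsc : ∀ ε : ℝ, 0 < ε → ∃ u : E, 0 ≤ u ∧
      T '' Metric.closedBall 0 1 ⊆ Set.Icc (-u) u + Metric.closedBall (0 : E) ε) :
    (PropertyD E → AlmostLimitedSet (T '' Metric.closedBall 0 1)) ∧
    (DualLatticeWeakStarSeqCont E → LimitedSet (T '' Metric.closedBall 0 1)) := by
  have hbdd : Bornology.IsBounded (T '' Metric.closedBall 0 1) :=
    T.lipschitz.isBounded_image Metric.isBounded_closedBall
  constructor
  · intro hd
    exact ⟨hbdd, fun f hdis hw => key_uniform T hsc f hw (hd f hdis hw)⟩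
  · intro hc
    exact ⟨hbdd, fun f hw => key_uniform T hsc f hw (hc f hw)⟩
end
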